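/- Let G be a finite graph in which exactly four vertices v1, v2, v3, v4 have odd degree and all other vertices have even degree. Suppose v1, v2, v3, v4 all lie in the same connected component of G. If P is any simple path in G from v1 to v3, then in the graph G with the edges of P removed, the vertices v2 and v4 lie in the same connected component; consequently G contains two edge-disjoint paths, one from v1 to v3 and one from v2 to v4. -/

import Mathlib

open SimpleGraph

lemma countP_eq_aux {V : Type*} [Fintype V] [DecidableEq V] {G : SimpleGraph V}
    [DecidableRel G.Adj] {u w : V} {p : G.Walk u w} (ht : p.IsTrail) (x : V) :
    (p.edges.countP fun e => x ∈ e) =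
      ((G.neighborFinset x).filter fun y => s(x, y) ∈ p.edges).card := by
  rw [List.countP_eq_length_filter, ← List.toFinset_card_of_nodup (ht.edges_nodup.filter _)]
  refine (Finset.card_bij (fun y _ => s(x, y)) ?_ ?_ ?_).symm
  · intro y hy
    simp only [Finset.mem_filter, SimpleGraph.mem_neighborFinset] at hy
    simp [List.mem_toFinset, List.mem_filter, hy.2]
  · intro a ha b hb hab
    exact Sym2.congr_right.mp hab
  · intro e he
    simp only [List.mem_toFinset, List.mem_filter, decide_eq_true_eq] at he
    obtain ⟨he1, he2⟩ := he
    refine ⟨Sym2.Mem.other' he2, ?_, Sym2.other_spec' he2⟩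
    have hedge : e ∈ G.edgeSet := p.edges_subset_edgeSet he1
    rw [← Sym2.other_spec' he2] at hedge he1
    simp only [Finset.mem_filter, SimpleGraph.mem_neighborFinset]
    exact ⟨hedge, he1⟩

lemma degree_deleteEdges_add_aux {V : Type*} [Fintype V] [DecidableEq V] {G : SimpleGraph V}
    [DecidableRel G.Adj] {u w : V} {p : G.Walk u w} (ht : p.IsTrail) (x : V)
    [DecidableRel (G.deleteEdges {e | e ∈ p.edges}).Adj] :
    (G.deleteEdges {e | e ∈ p.edges}).degree x + (p.edges.countP fun e => x ∈ e)
      = G.degree x := by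
  have hnf : (G.deleteEdges {e | e ∈ p.edges}).neighborFinset x
      = (G.neighborFinset x).filter (fun y => ¬ (s(x, y) ∈ p.edges)) := by
    ext y
    simp [SimpleGraph.deleteEdges_adj, Set.mem_setOf_eq]
  rw [← card_neighborFinset_eq_degree, ← card_neighborFinset_eq_degree, hnf,
    countP_eq_aux ht, add_comm]
  exact Finset.card_filter_add_card_filter_not _

/-- If a finite graph has exactly four odd-degree vertices `v1,v2,v3,v4`, all in
the same connected component, then removing the edges of any simple path from
`v1` to `v3` leaves `v2` and `v4` in the same connected component; consequently
`G` contains two edge-disjoint paths, one from `v1` to `v3` and one from `v2`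
to `v4`. -/
theorem stmt_4 {V : Type*} [Fintype V] [DecidableEq V] (G : SimpleGraph V)
    [DecidableRel G.Adj] (v1 v2 v3 v4 : V)
    (hdistinct : [v1, v2, v3, v4].Nodup)
    (hodd : {v : V | Odd (G.degree v)} = {v1, v2, v3, v4})
    (hconn : G.Reachable v1 v2 ∧ G.Reachable v1 v3 ∧ G.Reachable v1 v4)
    (p : G.Walk v1 v3) (hp : p.IsPath) :
    (G.deleteEdges {e | e ∈ p.edges}).Reachable v2 v4 ∧
    ∃ q : G.Walk v2 v4, q.IsPath ∧ ∀ e ∈ q.edges, e ∉ p.edges := by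
  classical
  set G' := G.deleteEdges {e | e ∈ p.edges} with hG'
  simp only [List.nodup_cons, List.mem_cons, List.mem_singleton, List.not_mem_nil,
    or_false, List.nodup_nil, and_true, not_or] at hdistinct
  obtain ⟨⟨h12, h13, h14⟩, ⟨h23, h24⟩, h34, -⟩ := hdistinct
  have hG : ∀ x : V, Odd (G.degree x) ↔ (x = v1 ∨ x = v2 ∨ x = v3 ∨ x = v4) := by
    intro x
    have := Set.ext_iff.mp hodd x
    simpa using this
  -- parity characterization of odd vertices in G'
  have hkey : ∀ x : V, Odd (G'.degree x) ↔ (x = v2 ∨ x = v4) := by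
    intro x
    have h2 : Odd (G.degree x) ↔ (Odd (G'.degree x) ↔ Even (p.edges.countP fun e => x ∈ e)) := by
      rw [← degree_deleteEdges_add_aux hp.isTrail x, Nat.odd_add]
    have h3 : Even (p.edges.countP fun e => x ∈ e) ↔ (x ≠ v1 ∧ x ≠ v3) := by
      rw [hp.isTrail.even_countP_edges_iff x]
      simp [h13]
    constructor
    · intro hB
      by_contra hc
      push_neg at hc
      obtain ⟨hc2, hc4⟩ := hc
      by_cases hA : Odd (G.degree x)
      · have hC := (h2.mp hA).mp hB
        have hne := h3.mp hC
        rcases (hG x).mp hA with h | h | h | h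
        · exact hne.1 h
        · exact hc2 h
        · exact hne.2 h
        · exact hc4 h
      · have hnC : ¬ Even (p.edges.countP fun e => x ∈ e) :=
          fun hC => hA (h2.mpr ⟨fun _ => hC, fun _ => hB⟩)
        have hne : ¬ (x ≠ v1 ∧ x ≠ v3) := fun h => hnC (h3.mpr h)
        rcases Classical.em (x = v1) with h | h
        · exact hA ((hG x).mpr (Or.inl h))
        · have h3x : x = v3 := by
            by_contra h3x
            exact hne ⟨h, h3x⟩
          exact hA ((hG x).mpr (Or.inr (Or.inr (Or.inl h3x))))
    · rintro (rfl | rfl)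
      · exact (h2.mp ((hG x).mpr (Or.inr (Or.inl rfl)))).mpr
          (h3.mpr ⟨fun h => h12 h.symm, h23⟩)
      · exact (h2.mp ((hG x).mpr (Or.inr (Or.inr (Or.inr rfl))))).mpr
          (h3.mpr ⟨fun h => h14 h.symm, fun h => h34 h.symm⟩)
  have hodd2 : Odd (G'.degree v2) := (hkey v2).mpr (Or.inl rfl)
  -- the auxiliary graph: restriction of G' to the component of v2
  let H : SimpleGraph V :=
    { Adj := fun a b => G'.Adj a b ∧ G'.Reachable v2 a ∧ G'.Reachable v2 b
      symm := ⟨fun a b hab => ⟨hab.1.symm, hab.2.2, hab.2.1⟩⟩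
      loopless := ⟨fun a ha => G'.loopless.irrefl a ha.1⟩ }
  have hHdeg : ∀ a : V, G'.Reachable v2 a → H.degree a = G'.degree a := by
    intro a ha
    have hset : H.neighborSet a = G'.neighborSet a := by
      ext b
      simp only [SimpleGraph.mem_neighborSet]
      exact ⟨fun h => h.1, fun h => ⟨h, ha, ha.trans h.reachable⟩⟩
    rw [← card_neighborSet_eq_degree, ← card_neighborSet_eq_degree]
    exact Fintype.card_congr (Equiv.setCongr hset)
  have hHreach : ∀ a : V, Odd (H.degree a) → G'.Reachable v2 a := by
    intro a ha
    by_contra hn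
    have hset : H.neighborSet a = ∅ := by
      ext b
      simp only [SimpleGraph.mem_neighborSet, Set.mem_empty_iff_false, iff_false]
      exact fun h => hn h.2.1
    have : H.degree a = 0 := by
      rw [← card_neighborSet_eq_degree]
      simp [hset]
    rw [this] at ha
    exact (Nat.not_odd_iff_even.mpr Even.zero) ha
  have hH2 : Odd (H.degree v2) := by
    rw [hHdeg v2 (Reachable.refl v2)]; exact hodd2
  obtain ⟨w, hwne, hwodd⟩ := H.exists_ne_odd_degree_of_exists_odd_degree v2 hH2
  have hwreach : G'.Reachable v2 w := hHreach w hwodd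
  have hwodd' : Odd (G'.degree w) := by rw [← hHdeg w hwreach]; exact hwodd
  have hw4 : w = v4 := by
    rcases (hkey w).mp hwodd' with h | h
    · exact absurd h hwne
    · exact h
  have hreach : G'.Reachable v2 v4 := hw4 ▸ hwreach
  refine ⟨hreach, ?_⟩
  obtain ⟨q0⟩ := hreach
  let q1 := q0.toPath
  have hsub : ∀ e ∈ (q1 : G'.Walk v2 v4).edges, e ∈ G.edgeSet := by
    intro e he
    have := (q1 : G'.Walk v2 v4).edges_subset_edgeSet he
    rw [hG', SimpleGraph.edgeSet_deleteEdges] at this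
    exact this.1
  refine ⟨(q1 : G'.Walk v2 v4).transfer G hsub, SimpleGraph.Walk.IsPath.transfer hsub q1.2, ?_⟩
  intro e he
  rw [SimpleGraph.Walk.edges_transfer] at he
  have := (q1 : G'.Walk v2 v4).edges_subset_edgeSet he
  rw [hG', SimpleGraph.edgeSet_deleteEdges] at this
  exact this.2
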